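/- A nonempty set P ⊆ ℝ^n is a multimodular polyhedron if and only if it can be represented as P = {x ∈ ℝ^n : a_I ≤ x(I) ≤ b_I for every consecutive subset I of N = {1,…,n}} for some values a_I ∈ ℝ ∪ {−∞} and b_I ∈ ℝ ∪ {+∞} indexed by the consecutive subsets I of N. -/

import Mathlib

/-- A polyhedron in `ℝⁿ` is the solution set of a finite system of linear
inequalities. -/
def IsPolyhedron {n : ℕ} (P : Set (Fin n → ℝ)) : Prop :=
  ∃ (m : ℕ) (A : Fin m → Fin n → ℝ) (b : Fin m → ℝ),
    P = {x | ∀ i, ∑ j, A i j * x j ≤ b i}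

/-- A nonempty polyhedron `P ⊆ ℝⁿ` is L-convex if it is closed under
componentwise max/min and under translation by real multiples of `𝟏`. -/
def IsLConvexPoly {n : ℕ} (P : Set (Fin n → ℝ)) : Prop :=
  IsPolyhedron P ∧ P.Nonempty ∧
  (∀ x ∈ P, ∀ y ∈ P, x ⊔ y ∈ P ∧ x ⊓ y ∈ P) ∧
  (∀ x ∈ P, ∀ μ : ℝ, (x + fun _ => μ) ∈ P)

/-- A polyhedron `P ⊆ ℝⁿ` is L♮-convex if it is the intersection of an
L-convex polyhedron `Q ⊆ ℝ^{n+1}` with the hyperplane "last coordinate 0". -/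
def IsLNatConvexPoly {n : ℕ} (P : Set (Fin n → ℝ)) : Prop :=
  IsPolyhedron P ∧
  ∃ Q : Set (Fin (n + 1) → ℝ), IsLConvexPoly Q ∧
    P = {x : Fin n → ℝ | Fin.snoc x (0 : ℝ) ∈ Q}

/-- The bidiagonal matrix `D` with `d_{ii} = 1` and `d_{i+1,i} = -1`. -/
def matD (n : ℕ) : Matrix (Fin n) (Fin n) ℝ :=
  Matrix.of fun i j => if i = j then 1 else if (i : ℕ) = (j : ℕ) + 1 then -1 else 0

/-- A polyhedron is multimodular if it is the image of an L♮-convex polyhedron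
under the matrix `D`. -/
def IsMultimodularPoly {n : ℕ} (P : Set (Fin n → ℝ)) : Prop :=
  ∃ Q : Set (Fin n → ℝ), IsLNatConvexPoly Q ∧ P = (matD n).mulVec '' Q

/-- A subset `I ⊆ N` is consecutive if `I = {k, k+1, …, l}` for some `k ≤ l`. -/
def IsConsecutive {n : ℕ} (I : Finset (Fin n)) : Prop :=
  ∃ k l : Fin n, k ≤ l ∧ I = Finset.Icc k l

noncomputable section MMAux

/-- Partial-sum map, the inverse of `(matD n).mulVec`. -/
def Smap {n : ℕ} (x : Fin n → ℝ) : Fin n → ℝ := fun l => ∑ i ∈ Finset.Iic l, x i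

/-- The index in `Fin (n+1)` "just before" `k`: `k - 1` if `k > 0`, and the
last index (where the lift coordinate, identically `0`, lives) if `k = 0`. -/
def idx {n : ℕ} (k : Fin n) : Fin (n+1) :=
  if (k:ℕ) = 0 then Fin.last n
  else Fin.castSucc ⟨(k:ℕ)-1, Nat.lt_of_le_of_lt (Nat.sub_le _ _) k.isLt⟩

lemma snoc_Smap_sub {n : ℕ} (x : Fin n → ℝ) (k l : Fin n) (hkl : k ≤ l) :
    (Fin.snoc (Smap x) 0 : Fin (n+1) → ℝ) (Fin.castSucc l)
      - (Fin.snoc (Smap x) 0 : Fin (n+1) → ℝ) (idx k) = ∑ i ∈ Finset.Icc k l, x i := by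
  rw [Fin.snoc_castSucc]
  unfold idx
  split_ifs with h
  · rw [Fin.snoc_last, sub_zero]
    unfold Smap
    apply Finset.sum_congr _ (fun _ _ => rfl)
    ext i
    simp only [Finset.mem_Iic, Finset.mem_Icc, Fin.le_def]
    omega
  · rw [Fin.snoc_castSucc]
    unfold Smap
    have hsub : Finset.Iic (⟨(k:ℕ)-1, Nat.lt_of_le_of_lt (Nat.sub_le _ _) k.isLt⟩ : Fin n)
        ⊆ Finset.Iic l := by
      apply Finset.Iic_subset_Iic.2
      simp only [Fin.le_def]
      omega
    rw [eq_comm, ← Finset.sum_sdiff_eq_sub hsub]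
    apply Finset.sum_congr _ (fun _ _ => rfl)
    ext i
    simp only [Finset.mem_sdiff, Finset.mem_Iic, Finset.mem_Icc, Fin.le_def]
    have := Fin.le_def.mp hkl
    omega

lemma matD_mulVec {n : ℕ} (y : Fin n → ℝ) (i : Fin n) :
    (matD n).mulVec y i
      = y i - (if _h : (i:ℕ) = 0 then 0
          else y ⟨(i:ℕ)-1, Nat.lt_of_le_of_lt (Nat.sub_le _ _) i.isLt⟩) := by
  rw [Matrix.mulVec, dotProduct]
  split_ifs with h
  · rw [sub_zero]
    have hpt : ∀ j : Fin n, matD n i j * y j = if i = j then y j else 0 := by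
      intro j
      simp only [matD, Matrix.of_apply]
      split_ifs with h1 h2
      · ring
      · omega
      · ring
    rw [Finset.sum_congr rfl (fun j _ => hpt j), Finset.sum_ite_eq]
    simp
  · set p : Fin n := ⟨(i:ℕ)-1, Nat.lt_of_le_of_lt (Nat.sub_le _ _) i.isLt⟩ with hp
    have hpt : ∀ j : Fin n, matD n i j * y j
        = (if i = j then y j else 0) + (if p = j then -y j else 0) := by
      intro j
      simp only [matD, Matrix.of_apply]
      by_cases h1 : i = j
      · have h2 : ¬ (i:ℕ) = (j:ℕ) + 1 := by rw [← h1]; omega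
        have hp1 : ¬ p = j := by
          rw [Fin.ext_iff]; simp only [hp]; rw [← h1]; omega
        simp [h1, h2, hp1]
      · by_cases h2 : (i:ℕ) = (j:ℕ) + 1
        · have hp2 : p = j := by rw [Fin.ext_iff]; simp only [hp]; omega
          simp [h1, h2, hp2]
        · have hp2 : ¬ p = j := by
            rw [Fin.ext_iff]; simp only [hp]; omega
          simp [h1, h2, hp2]
    rw [Finset.sum_congr rfl (fun j _ => hpt j), Finset.sum_add_distrib,
      Finset.sum_ite_eq, Finset.sum_ite_eq]
    simp [sub_eq_add_neg]

lemma matD_Smap {n : ℕ} (x : Fin n → ℝ) : (matD n).mulVec (Smap x) = x := by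
  funext i
  rw [matD_mulVec]
  split_ifs with h
  · rw [sub_zero]
    unfold Smap
    have : Finset.Iic i = {i} := by
      ext j; simp only [Finset.mem_Iic, Finset.mem_singleton, Fin.le_def, Fin.ext_iff]; omega
    rw [this, Finset.sum_singleton]
  · unfold Smap
    have hsub : Finset.Iic (⟨(i:ℕ)-1, Nat.lt_of_le_of_lt (Nat.sub_le _ _) i.isLt⟩ : Fin n)
        ⊆ Finset.Iic i := by
      apply Finset.Iic_subset_Iic.2; simp only [Fin.le_def]; omega
    rw [← Finset.sum_sdiff_eq_sub hsub]
    have : Finset.Iic i \ Finset.Iic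
        (⟨(i:ℕ)-1, Nat.lt_of_le_of_lt (Nat.sub_le _ _) i.isLt⟩ : Fin n) = {i} := by
      ext j
      simp only [Finset.mem_sdiff, Finset.mem_Iic, Finset.mem_singleton, Fin.le_def, Fin.ext_iff]
      omega
    rw [this, Finset.sum_singleton]

lemma Smap_matD {n : ℕ} (y : Fin n → ℝ) : Smap ((matD n).mulVec y) = y := by
  funext l
  suffices h : ∀ m (hm : m < n), Smap ((matD n).mulVec y) ⟨m, hm⟩ = y ⟨m, hm⟩ by
    simpa using h l.1 l.2
  intro m
  induction m with
  | zero =>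
    intro hm
    unfold Smap
    have : Finset.Iic (⟨0, hm⟩ : Fin n) = {⟨0, hm⟩} := by
      ext j; simp only [Finset.mem_Iic, Finset.mem_singleton, Fin.le_def, Fin.ext_iff]; omega
    rw [this, Finset.sum_singleton, matD_mulVec]
    simp
  | succ m ih =>
    intro hm
    have hm' : m < n := by omega
    unfold Smap
    have : Finset.Iic (⟨m+1, hm⟩ : Fin n) = insert ⟨m+1, hm⟩ (Finset.Iic (⟨m, hm'⟩ : Fin n)) := by
      ext j
      simp only [Finset.mem_Iic, Finset.mem_insert, Fin.le_def, Fin.ext_iff]; omega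
    have hnm : (⟨m+1, hm⟩ : Fin n) ∉ Finset.Iic (⟨m, hm'⟩ : Fin n) := by
      simp only [Finset.mem_Iic, Fin.le_def]; omega
    rw [this, Finset.sum_insert hnm]
    have ihm := ih hm'
    unfold Smap at ihm
    rw [ihm, matD_mulVec]
    have h1 : ¬ ((⟨m+1, hm⟩ : Fin n) : ℕ) = 0 := by simp
    rw [dif_neg h1]
    have h2 : (⟨(((⟨m+1, hm⟩ : Fin n)):ℕ)-1,
        Nat.lt_of_le_of_lt (Nat.sub_le _ _) (⟨m+1, hm⟩ : Fin n).isLt⟩ : Fin n) = ⟨m, hm'⟩ := by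
      rw [Fin.ext_iff]; simp
    rw [h2]
    ring

lemma mem_image_matD {n : ℕ} (Q : Set (Fin n → ℝ)) (x : Fin n → ℝ) :
    x ∈ (matD n).mulVec '' Q ↔ Smap x ∈ Q := by
  constructor
  · rintro ⟨y, hy, rfl⟩; rwa [Smap_matD]
  · intro h; exact ⟨Smap x, h, matD_Smap x⟩

lemma isPolyhedron_fintype {n : ℕ} {ι : Type} [Fintype ι] (c : ι → Fin n → ℝ) (d : ι → ℝ) :
    IsPolyhedron {x : Fin n → ℝ | ∀ i, ∑ j, c i j * x j ≤ d i} := by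
  classical
  set e := (Fintype.equivFin ι).symm
  refine ⟨Fintype.card ι, fun i => c (e i), fun i => d (e i), ?_⟩
  ext x
  simp only [Set.mem_setOf_eq]
  constructor
  · intro h i; exact h (e i)
  · intro h i
    have := h (e.symm i)
    simpa using this

lemma IsPolyhedron.isClosed {n : ℕ} {P : Set (Fin n → ℝ)} (h : IsPolyhedron P) :
    IsClosed P := by
  obtain ⟨m, A, b, rfl⟩ := h
  have : {x : Fin n → ℝ | ∀ i, ∑ j, A i j * x j ≤ b i}
      = ⋂ i, {x : Fin n → ℝ | ∑ j, A i j * x j ≤ b i} := by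
    ext x; simp
  rw [this]
  refine isClosed_iInter fun i => isClosed_le ?_ continuous_const
  exact continuous_finset_sum _ fun j _ => continuous_const.mul (continuous_apply j)

lemma isPolyhedron_slice {n : ℕ} {Q : Set (Fin (n+1) → ℝ)} (h : IsPolyhedron Q) :
    IsPolyhedron {y : Fin n → ℝ | Fin.snoc y (0:ℝ) ∈ Q} := by
  obtain ⟨m, A, b, rfl⟩ := h
  refine ⟨m, fun i j => A i (Fin.castSucc j), b, ?_⟩
  ext y
  simp only [Set.mem_setOf_eq]
  refine forall_congr' fun i => ?_
  rw [Fin.sum_univ_castSucc]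
  simp [Fin.snoc_castSucc, Fin.snoc_last]

lemma sup'_mem {α : Type*} [SemilatticeSup α] {S : Set α}
    (hS : ∀ x ∈ S, ∀ y ∈ S, x ⊔ y ∈ S)
    {ι : Type*} (t : Finset ι) (ht : t.Nonempty) (f : ι → α) (hf : ∀ i ∈ t, f i ∈ S) :
    t.sup' ht f ∈ S := by
  induction ht using Finset.Nonempty.cons_induction with
  | singleton i => simpa using hf i (by simp)
  | cons i t hit hts ih =>
    rw [Finset.sup'_cons hts]
    exact hS _ (hf i (by simp)) _ (ih fun j hj => hf j (by simp [hj]))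

lemma inf'_mem {α : Type*} [SemilatticeInf α] {S : Set α}
    (hS : ∀ x ∈ S, ∀ y ∈ S, x ⊓ y ∈ S)
    {ι : Type*} (t : Finset ι) (ht : t.Nonempty) (f : ι → α) (hf : ∀ i ∈ t, f i ∈ S) :
    t.inf' ht f ∈ S := by
  induction ht using Finset.Nonempty.cons_induction with
  | singleton i => simpa using hf i (by simp)
  | cons i t hit hts ih =>
    rw [Finset.inf'_cons hts]
    exact hS _ (hf i (by simp)) _ (ih fun j hj => hf j (by simp [hj]))

/-- Structure theorem (one half): a point satisfying all the tight
"difference bound" constraints of an L-convex polyhedron belongs to it. -/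
lemma lconvex_mem {m : ℕ} {S : Set (Fin m → ℝ)} (hS : IsLConvexPoly S)
    (z : Fin m → ℝ)
    (hz : ∀ p q : Fin m, BddAbove {r : ℝ | ∃ w ∈ S, w p - w q = r} →
      z p - z q ≤ sSup {r : ℝ | ∃ w ∈ S, w p - w q = r}) :
    z ∈ S := by
  classical
  obtain ⟨hpoly, ⟨v, hv⟩, hlat, htr⟩ := hS
  by_cases hm : m = 0
  · have : z = v := funext fun i => absurd i.isLt (by omega)
    rwa [this]
  haveI : Nonempty (Fin m) := ⟨⟨0, Nat.pos_of_ne_zero hm⟩⟩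
  have hclosed : IsClosed S := hpoly.isClosed
  have hcl : z ∈ closure S := by
    rw [Metric.mem_closure_iff]
    intro ε hε
    have claim : ∀ i j : Fin m, ∃ y ∈ S, z i - z j - ε/2 < y i - y j := by
      intro i j
      set U := {r : ℝ | ∃ w ∈ S, w i - w j = r} with hU
      have hUne : U.Nonempty := ⟨v i - v j, v, hv, rfl⟩
      by_cases hb : BddAbove U
      · have h1 := hz i j hb
        have h2 : z i - z j - ε/2 < sSup U := by linarith
        obtain ⟨r, hrU, hr⟩ := exists_lt_of_lt_csSup hUne h2
        obtain ⟨w, hw, rfl⟩ := hrU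
        exact ⟨w, hw, hr⟩
      · obtain ⟨r, hrU, hr⟩ := (not_bddAbove_iff.1 hb) (z i - z j - ε/2)
        obtain ⟨w, hw, rfl⟩ := hrU
        exact ⟨w, hw, hr⟩
    choose y hyS hy using claim
    set Y : Fin m → Fin m → (Fin m → ℝ) :=
      fun i j => y i j + fun _ => (z i - y i j i) with hY
    have hYS : ∀ i j, Y i j ∈ S := fun i j => htr _ (hyS i j) _
    have hYi : ∀ i j, Y i j i = z i := by intro i j; simp [hY]
    have hYj : ∀ i j, Y i j j ≤ z j + ε/2 := by
      intro i j
      have := hy i j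
      simp only [hY, Pi.add_apply]
      linarith
    set Z : Fin m → (Fin m → ℝ) :=
      fun i => Finset.univ.inf' Finset.univ_nonempty (Y i) with hZ
    have hZS : ∀ i, Z i ∈ S :=
      fun i => inf'_mem (fun x hx y hy => (hlat x hx y hy).2) _ _ _ (fun j _ => hYS i j)
    have hZi : ∀ i, Z i i = z i := by
      intro i
      rw [hZ]
      simp only
      rw [Finset.inf'_apply]
      have hcg : ∀ j ∈ Finset.univ, Y i j i = z i := fun j _ => hYi i j
      rw [Finset.inf'_congr Finset.univ_nonempty rfl hcg]
      exact Finset.inf'_const _ _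
    have hZle : ∀ i j, Z i j ≤ z j + ε/2 := by
      intro i j
      rw [hZ]
      simp only
      rw [Finset.inf'_apply]
      exact le_trans (Finset.inf'_le _ (Finset.mem_univ j)) (hYj i j)
    set W := Finset.univ.sup' Finset.univ_nonempty Z with hW
    have hWS : W ∈ S :=
      sup'_mem (fun x hx y hy => (hlat x hx y hy).1) _ _ _ (fun i _ => hZS i)
    have hWlow : ∀ j, z j ≤ W j := by
      intro j
      rw [hW, Finset.sup'_apply]
      exact le_trans (le_of_eq (hZi j).symm)
        (Finset.le_sup' (fun i => Z i j) (Finset.mem_univ j))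
    have hWhigh : ∀ j, W j ≤ z j + ε/2 := by
      intro j
      rw [hW, Finset.sup'_apply]
      exact Finset.sup'_le _ _ fun i _ => hZle i j
    refine ⟨W, hWS, ?_⟩
    rw [dist_pi_lt_iff hε]
    intro j
    rw [Real.dist_eq, abs_sub_lt_iff]
    exact ⟨by linarith [hWlow j, hWhigh j], by linarith [hWlow j, hWhigh j]⟩
  exact hclosed.closure_subset hcl

lemma aux_sup2 (a b c d : ℝ) : min (a-c) (b-d) ≤ max a b - max c d := by
  have h := max_sub_max_le_max c d a b
  have e1 : c - a = -(a-c) := by ring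
  have e2 : d - b = -(b-d) := by ring
  rw [e1, e2, max_neg_neg] at h
  linarith

lemma aux_min1 (a b c d : ℝ) : min a b - min c d ≤ max (a-c) (b-d) := by
  have h := max_sub_max_le_max (-c) (-d) (-a) (-b)
  have e1 : -c - -a = a - c := by ring
  have e2 : -d - -b = b - d := by ring
  rw [e1, e2, max_neg_neg, max_neg_neg] at h
  linarith

lemma aux_min2 (a b c d : ℝ) : min (a-c) (b-d) ≤ min a b - min c d := by
  have h := max_sub_max_le_max (-a) (-b) (-c) (-d)
  have e1 : -a - -c = -(a-c) := by ring
  have e2 : -b - -d = -(b-d) := by ring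
  rw [e1, e2, max_neg_neg, max_neg_neg, max_neg_neg] at h
  linarith

end MMAux

/-- A nonempty set `P ⊆ ℝⁿ` is a multimodular polyhedron iff it is described by
bounds `a_I ≤ x(I) ≤ b_I` over the consecutive subsets `I` of `N`, with
`a_I ∈ ℝ ∪ {-∞}` and `b_I ∈ ℝ ∪ {+∞}`. -/
theorem multimodular_polyhedron_description {n : ℕ} (P : Set (Fin n → ℝ))
    (hne : P.Nonempty) :
    IsMultimodularPoly P ↔
      ∃ (a : Finset (Fin n) → WithBot ℝ) (b : Finset (Fin n) → WithTop ℝ),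
        P = {x : Fin n → ℝ | ∀ I : Finset (Fin n), IsConsecutive I →
          a I ≤ ((∑ i ∈ I, x i : ℝ) : WithBot ℝ) ∧
          ((∑ i ∈ I, x i : ℝ) : WithTop ℝ) ≤ b I} := by
  classical
  constructor
  · -- Forward direction
    rintro ⟨Q, ⟨hQpoly, Q', hQ'L, hQslice⟩, hPimg⟩
    set T : Finset (Fin n) → Set ℝ := fun I => (fun x : Fin n → ℝ => ∑ i ∈ I, x i) '' P with hT
    refine ⟨fun I => if _h : BddBelow (T I) then ((sInf (T I) : ℝ) : WithBot ℝ) else ⊥,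
            fun I => if _h : BddAbove (T I) then ((sSup (T I) : ℝ) : WithTop ℝ) else ⊤, ?_⟩
    have hlift : ∀ x ∈ P, (Fin.snoc (Smap x) 0 : Fin (n+1) → ℝ) ∈ Q' := by
      intro x hx
      rw [hPimg, mem_image_matD] at hx
      rw [hQslice] at hx
      exact hx
    ext z
    simp only [Set.mem_setOf_eq]
    constructor
    · intro hzP I _
      constructor
      · split_ifs with h
        · exact WithBot.coe_le_coe.2 (csInf_le h ⟨z, hzP, rfl⟩)
        · exact bot_le
      · split_ifs with h
        · exact WithTop.coe_le_coe.2 (le_csSup h ⟨z, hzP, rfl⟩)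
        · exact le_top
    · intro hz
      have key_sup : ∀ (p q : Fin (n+1)) (k l : Fin n), k ≤ l →
          (∀ x : Fin n → ℝ, (Fin.snoc (Smap x) 0 : Fin (n+1) → ℝ) p
              - (Fin.snoc (Smap x) 0 : Fin (n+1) → ℝ) q = ∑ i ∈ Finset.Icc k l, x i) →
          BddAbove {r : ℝ | ∃ w ∈ Q', w p - w q = r} →
          (Fin.snoc (Smap z) 0 : Fin (n+1) → ℝ) p - (Fin.snoc (Smap z) 0 : Fin (n+1) → ℝ) q
            ≤ sSup {r : ℝ | ∃ w ∈ Q', w p - w q = r} := by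
        intro p q k l hkl hid hU
        have hTsub : T (Finset.Icc k l) ⊆ {r : ℝ | ∃ w ∈ Q', w p - w q = r} := by
          rintro r ⟨x, hx, rfl⟩
          exact ⟨Fin.snoc (Smap x) 0, hlift x hx, hid x⟩
        have hTne : (T (Finset.Icc k l)).Nonempty := hne.image _
        have hTbdd : BddAbove (T (Finset.Icc k l)) := hU.mono hTsub
        have hcon := (hz (Finset.Icc k l) ⟨k, l, hkl, rfl⟩).2
        rw [dif_pos hTbdd] at hcon
        have h1' : (∑ i ∈ Finset.Icc k l, z i) ≤ sSup (T (Finset.Icc k l)) := by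
          have := WithTop.coe_le_coe.1 hcon
          exact this
        rw [hid z]
        exact le_trans h1' (csSup_le_csSup hU hTne hTsub)
      have key_inf : ∀ (p q : Fin (n+1)) (k l : Fin n), k ≤ l →
          (∀ x : Fin n → ℝ, (Fin.snoc (Smap x) 0 : Fin (n+1) → ℝ) p
              - (Fin.snoc (Smap x) 0 : Fin (n+1) → ℝ) q = -(∑ i ∈ Finset.Icc k l, x i)) →
          BddAbove {r : ℝ | ∃ w ∈ Q', w p - w q = r} →
          (Fin.snoc (Smap z) 0 : Fin (n+1) → ℝ) p - (Fin.snoc (Smap z) 0 : Fin (n+1) → ℝ) q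
            ≤ sSup {r : ℝ | ∃ w ∈ Q', w p - w q = r} := by
        intro p q k l hkl hid hU
        have hTneg : ∀ r ∈ T (Finset.Icc k l), -r ∈ {r : ℝ | ∃ w ∈ Q', w p - w q = r} := by
          rintro r ⟨x, hx, rfl⟩
          exact ⟨Fin.snoc (Smap x) 0, hlift x hx, hid x⟩
        have hTne : (T (Finset.Icc k l)).Nonempty := hne.image _
        have hTbb : BddBelow (T (Finset.Icc k l)) := by
          obtain ⟨M, hM⟩ := hU
          refine ⟨-M, ?_⟩
          rintro r hr
          have := hM (hTneg r hr)
          linarith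
        have hcon := (hz (Finset.Icc k l) ⟨k, l, hkl, rfl⟩).1
        rw [dif_pos hTbb] at hcon
        have h1 : sInf (T (Finset.Icc k l)) ≤ (∑ i ∈ Finset.Icc k l, z i) :=
          WithBot.coe_le_coe.1 hcon
        rw [hid z]
        have h2 : -(sSup {r : ℝ | ∃ w ∈ Q', w p - w q = r}) ≤ sInf (T (Finset.Icc k l)) := by
          apply le_csInf hTne
          intro r hr
          have := le_csSup hU (hTneg r hr)
          linarith
        linarith
      have key_diag : ∀ (p : Fin (n+1)),
          BddAbove {r : ℝ | ∃ w ∈ Q', w p - w p = r} →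
          (Fin.snoc (Smap z) 0 : Fin (n+1) → ℝ) p - (Fin.snoc (Smap z) 0 : Fin (n+1) → ℝ) p
            ≤ sSup {r : ℝ | ∃ w ∈ Q', w p - w p = r} := by
        intro p hU
        obtain ⟨w, hw⟩ := hQ'L.2.1
        rw [sub_self]
        exact le_csSup hU ⟨w, hw, sub_self _⟩
      have hw0 : (Fin.snoc (Smap z) 0 : Fin (n+1) → ℝ) ∈ Q' := by
        apply lconvex_mem hQ'L
        intro p q
        induction p using Fin.lastCases with
        | last =>
          induction q using Fin.lastCases with
          | last => exact key_diag _
          | cast q' =>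
            have hpos : 0 < n := lt_of_le_of_lt (Nat.zero_le _) q'.isLt
            have hle : (⟨0, hpos⟩ : Fin n) ≤ q' := by simp [Fin.le_def]
            refine key_inf _ _ ⟨0, hpos⟩ q' hle (fun x => ?_)
            have hidx : idx (⟨0, hpos⟩ : Fin n) = Fin.last n := if_pos rfl
            have := snoc_Smap_sub x ⟨0, hpos⟩ q' hle
            rw [hidx] at this
            linarith
        | cast p' =>
          induction q using Fin.lastCases with
          | last =>
            have hpos : 0 < n := lt_of_le_of_lt (Nat.zero_le _) p'.isLt
            have hle : (⟨0, hpos⟩ : Fin n) ≤ p' := by simp [Fin.le_def]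
            refine key_sup _ _ ⟨0, hpos⟩ p' hle (fun x => ?_)
            have hidx : idx (⟨0, hpos⟩ : Fin n) = Fin.last n := if_pos rfl
            have := snoc_Smap_sub x ⟨0, hpos⟩ p' hle
            rw [hidx] at this
            linarith
          | cast q' =>
            rcases lt_trichotomy p' q' with hlt | heq | hgt
            · -- p' < q' : difference is -(sum over Icc (p'+1) q')
              have hq : ((p':ℕ)+1) < n := lt_of_le_of_lt (Fin.lt_def.1 hlt) q'.isLt
              set k : Fin n := ⟨(p':ℕ)+1, hq⟩ with hk
              have hle : k ≤ q' := by
                simp only [hk, Fin.le_def]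
                exact Fin.lt_def.1 hlt
              refine key_inf _ _ k q' hle (fun x => ?_)
              have hidx : idx k = Fin.castSucc p' := by
                unfold idx
                rw [if_neg (by simp [hk])]
                apply Fin.ext
                simp [hk]
              have := snoc_Smap_sub x k q' hle
              rw [hidx] at this
              linarith
            · subst heq
              exact key_diag _
            · -- q' < p' : difference is sum over Icc (q'+1) p'
              have hq : ((q':ℕ)+1) < n := lt_of_le_of_lt (Fin.lt_def.1 hgt) p'.isLt
              set k : Fin n := ⟨(q':ℕ)+1, hq⟩ with hk
              have hle : k ≤ p' := by
                simp only [hk, Fin.le_def]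
                exact Fin.lt_def.1 hgt
              refine key_sup _ _ k p' hle (fun x => ?_)
              have hidx : idx k = Fin.castSucc q' := by
                unfold idx
                rw [if_neg (by simp [hk])]
                apply Fin.ext
                simp [hk]
              have := snoc_Smap_sub x k p' hle
              rw [hidx] at this
              linarith
      rw [hPimg, mem_image_matD, hQslice]
      exact hw0
  · -- Backward direction
    rintro ⟨a, b, hPeq⟩
    set Q' : Set (Fin (n+1) → ℝ) := {w | ∀ k l : Fin n, k ≤ l →
      a (Finset.Icc k l) ≤ ((w (Fin.castSucc l) - w (idx k) : ℝ) : WithBot ℝ) ∧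
      ((w (Fin.castSucc l) - w (idx k) : ℝ) : WithTop ℝ) ≤ b (Finset.Icc k l)} with hQ'def
    -- Q' is a polyhedron
    have hcastne : ∀ k l : Fin n, k ≤ l → Fin.castSucc l ≠ idx k := by
      intro k l hkl
      unfold idx
      split_ifs with h
      · intro hc
        exact absurd (congrArg Fin.val hc) (by simp [Fin.ext_iff]; omega)
      · intro hc
        have := congrArg Fin.val hc
        simp only [Fin.coe_castSucc] at this
        have hkl' := Fin.le_def.1 hkl
        omega
    have hcv : ∀ (k l : Fin n) (w : Fin (n+1) → ℝ),
        ∑ j, ((if j = Fin.castSucc l then (1:ℝ) else 0) - (if j = idx k then 1 else 0)) * w j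
          = w (Fin.castSucc l) - w (idx k) := by
      intro k l w
      have : ∀ j : Fin (n+1),
          ((if j = Fin.castSucc l then (1:ℝ) else 0) - (if j = idx k then 1 else 0)) * w j
            = (if j = Fin.castSucc l then w j else 0) - (if j = idx k then w j else 0) := by
        intro j; split_ifs <;> ring
      rw [Finset.sum_congr rfl (fun j _ => this j), Finset.sum_sub_distrib,
        Finset.sum_ite_eq', Finset.sum_ite_eq']
      simp
    have hpolyQ' : IsPolyhedron Q' := by
      have := isPolyhedron_fintype (ι := Fin n × Fin n × Bool)
        (fun t => if t.1 ≤ t.2.1 then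
            (cond t.2.2
              (if b (Finset.Icc t.1 t.2.1) = ⊤ then 0
               else fun j => (if j = Fin.castSucc t.2.1 then (1:ℝ) else 0)
                  - (if j = idx t.1 then 1 else 0))
              (if a (Finset.Icc t.1 t.2.1) = ⊥ then 0
               else fun j => -((if j = Fin.castSucc t.2.1 then (1:ℝ) else 0)
                  - (if j = idx t.1 then 1 else 0))))
          else 0)
        (fun t => if t.1 ≤ t.2.1 then
            (cond t.2.2 ((b (Finset.Icc t.1 t.2.1)).untopD 0)
              (-((a (Finset.Icc t.1 t.2.1)).unbotD 0)))
          else 0)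
      convert this using 2
      ext w
      constructor
      · intro hw t
        by_cases hkl : t.1 ≤ t.2.1
        · rcases t with ⟨k, l, s⟩
          simp only at hkl
          rw [if_pos hkl, if_pos hkl]
          obtain ⟨h1, h2⟩ := hw k l hkl
          cases s with
          | false =>
            simp only [Bool.cond_false]
            by_cases ha : a (Finset.Icc k l) = ⊥
            · rw [if_pos ha, ha]
              simp
            · rw [if_neg ha]
              obtain ⟨α, hα⟩ := WithBot.ne_bot_iff_exists.1 ha
              rw [← hα] at h1
              have h1' : α ≤ w (Fin.castSucc l) - w (idx k) := WithBot.coe_le_coe.1 h1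
              have hsum : ∑ j, (-((if j = Fin.castSucc l then (1:ℝ) else 0)
                  - (if j = idx k then 1 else 0))) * w j
                  = -(w (Fin.castSucc l) - w (idx k)) := by
                rw [← hcv k l w, ← Finset.sum_neg_distrib]
                apply Finset.sum_congr rfl
                intro j _
                ring
              rw [hsum, ← hα, WithBot.unbotD_coe]
              linarith
          | true =>
            simp only [Bool.cond_true]
            by_cases hb : b (Finset.Icc k l) = ⊤
            · rw [if_pos hb, hb]
              simp
            · rw [if_neg hb]
              obtain ⟨β, hβ⟩ := WithTop.ne_top_iff_exists.1 hb
              rw [← hβ] at h2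
              have h2' : w (Fin.castSucc l) - w (idx k) ≤ β := WithTop.coe_le_coe.1 h2
              rw [hcv k l w, ← hβ, WithTop.untopD_coe]
              exact h2'
        · rw [if_neg hkl, if_neg hkl]
          simp
      · intro hw k l hkl
        constructor
        · by_cases ha : a (Finset.Icc k l) = ⊥
          · rw [ha]; exact bot_le
          · obtain ⟨α, hα⟩ := WithBot.ne_bot_iff_exists.1 ha
            have := hw (k, l, false)
            rw [if_pos hkl, if_pos hkl] at this
            simp only [Bool.cond_false] at this
            rw [if_neg ha] at this
            have hsum : ∑ j, (-((if j = Fin.castSucc l then (1:ℝ) else 0)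
                - (if j = idx k then 1 else 0))) * w j
                = -(w (Fin.castSucc l) - w (idx k)) := by
              rw [← hcv k l w, ← Finset.sum_neg_distrib]
              apply Finset.sum_congr rfl
              intro j _
              ring
            rw [hsum, ← hα, WithBot.unbotD_coe] at this
            rw [← hα]
            exact WithBot.coe_le_coe.2 (by linarith)
        · by_cases hb : b (Finset.Icc k l) = ⊤
          · rw [hb]; exact le_top
          · obtain ⟨β, hβ⟩ := WithTop.ne_top_iff_exists.1 hb
            have := hw (k, l, true)
            rw [if_pos hkl, if_pos hkl] at this
            simp only [Bool.cond_true] at this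
            rw [if_neg hb] at this
            rw [hcv k l w, ← hβ, WithTop.untopD_coe] at this
            rw [← hβ]
            exact WithTop.coe_le_coe.2 this
    -- Q' is nonempty
    have hQ'ne : Q'.Nonempty := by
      obtain ⟨x0, hx0⟩ := hne
      rw [hPeq] at hx0
      refine ⟨Fin.snoc (Smap x0) 0, ?_⟩
      rw [hQ'def]
      intro k l hkl
      rw [snoc_Smap_sub x0 k l hkl]
      exact hx0 (Finset.Icc k l) ⟨k, l, hkl, rfl⟩
    -- Q' is closed under joins and meets
    have hQ'lat : ∀ w ∈ Q', ∀ v ∈ Q', w ⊔ v ∈ Q' ∧ w ⊓ v ∈ Q' := by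
      intro w hw v hv
      rw [hQ'def] at hw hv ⊢
      constructor
      · intro k l hkl
        obtain ⟨hw1, hw2⟩ := hw k l hkl
        obtain ⟨hv1, hv2⟩ := hv k l hkl
        simp only [Pi.sup_apply]
        constructor
        · have h5 : min (w (Fin.castSucc l) - w (idx k)) (v (Fin.castSucc l) - v (idx k))
              ≤ max (w (Fin.castSucc l)) (v (Fin.castSucc l)) - max (w (idx k)) (v (idx k)) :=
            aux_sup2 _ _ _ _
          have h6 : a (Finset.Icc k l) ≤
              ((min (w (Fin.castSucc l) - w (idx k)) (v (Fin.castSucc l) - v (idx k)) : ℝ)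
                : WithBot ℝ) := by
            rcases le_total (w (Fin.castSucc l) - w (idx k)) (v (Fin.castSucc l) - v (idx k))
              with h | h
            · rw [min_eq_left h]; exact hw1
            · rw [min_eq_right h]; exact hv1
          exact le_trans h6 (WithBot.coe_le_coe.2 h5)
        · have h5 : max (w (Fin.castSucc l)) (v (Fin.castSucc l))
              - max (w (idx k)) (v (idx k))
              ≤ max (w (Fin.castSucc l) - w (idx k)) (v (Fin.castSucc l) - v (idx k)) :=
            max_sub_max_le_max _ _ _ _
          have h6 : ((max (w (Fin.castSucc l) - w (idx k)) (v (Fin.castSucc l) - v (idx k)) : ℝ)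
                : WithTop ℝ) ≤ b (Finset.Icc k l) := by
            rcases le_total (w (Fin.castSucc l) - w (idx k)) (v (Fin.castSucc l) - v (idx k))
              with h | h
            · rw [max_eq_right h]; exact hv2
            · rw [max_eq_left h]; exact hw2
          exact le_trans (WithTop.coe_le_coe.2 h5) h6
      · intro k l hkl
        obtain ⟨hw1, hw2⟩ := hw k l hkl
        obtain ⟨hv1, hv2⟩ := hv k l hkl
        simp only [Pi.inf_apply]
        constructor
        · have h5 : min (w (Fin.castSucc l) - w (idx k)) (v (Fin.castSucc l) - v (idx k))
              ≤ min (w (Fin.castSucc l)) (v (Fin.castSucc l)) - min (w (idx k)) (v (idx k)) :=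
            aux_min2 _ _ _ _
          have h6 : a (Finset.Icc k l) ≤
              ((min (w (Fin.castSucc l) - w (idx k)) (v (Fin.castSucc l) - v (idx k)) : ℝ)
                : WithBot ℝ) := by
            rcases le_total (w (Fin.castSucc l) - w (idx k)) (v (Fin.castSucc l) - v (idx k))
              with h | h
            · rw [min_eq_left h]; exact hw1
            · rw [min_eq_right h]; exact hv1
          exact le_trans h6 (WithBot.coe_le_coe.2 h5)
        · have h5 : min (w (Fin.castSucc l)) (v (Fin.castSucc l))
              - min (w (idx k)) (v (idx k))
              ≤ max (w (Fin.castSucc l) - w (idx k)) (v (Fin.castSucc l) - v (idx k)) :=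
            aux_min1 _ _ _ _
          have h6 : ((max (w (Fin.castSucc l) - w (idx k)) (v (Fin.castSucc l) - v (idx k)) : ℝ)
                : WithTop ℝ) ≤ b (Finset.Icc k l) := by
            rcases le_total (w (Fin.castSucc l) - w (idx k)) (v (Fin.castSucc l) - v (idx k))
              with h | h
            · rw [max_eq_right h]; exact hv2
            · rw [max_eq_left h]; exact hw2
          exact le_trans (WithTop.coe_le_coe.2 h5) h6
    -- Q' is translation invariant
    have hQ'tr : ∀ w ∈ Q', ∀ μ : ℝ, (w + fun _ => μ) ∈ Q' := by
      intro w hw μ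
      rw [hQ'def] at hw ⊢
      intro k l hkl
      have heq : ((w + fun _ => μ : Fin (n+1) → ℝ)) (Fin.castSucc l)
            - ((w + fun _ => μ : Fin (n+1) → ℝ)) (idx k)
          = w (Fin.castSucc l) - w (idx k) := by
        simp only [Pi.add_apply]; ring
      rw [heq]
      exact hw k l hkl
    refine ⟨{y : Fin n → ℝ | Fin.snoc y (0:ℝ) ∈ Q'},
      ⟨isPolyhedron_slice hpolyQ', Q', ⟨hpolyQ', hQ'ne, hQ'lat, hQ'tr⟩, rfl⟩, ?_⟩
    ext x
    rw [mem_image_matD]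
    simp only [Set.mem_setOf_eq]
    constructor
    · intro hx
      rw [hPeq] at hx
      rw [hQ'def]
      intro k l hkl
      rw [snoc_Smap_sub x k l hkl]
      exact hx (Finset.Icc k l) ⟨k, l, hkl, rfl⟩
    · intro hx
      rw [hQ'def] at hx
      rw [hPeq]
      rintro I ⟨k, l, hkl, rfl⟩
      have := hx k l hkl
      rwa [snoc_Smap_sub x k l hkl] at this
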